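/- arXiv:math/0606025 — 2 statements merged into one kernel-verified Lean document; each statement's English description precedes it below -/
import Mathlib

section
/- Let N = S¹ be the circle, let m ≥ 2, and let f₁, f₂ : M → S¹ be continuous maps which are not homotopic to each other. Then MC(f₁, f₂) = ∞, i.e. every pair of maps (f₁', f₂') with f₁' homotopic to f₁ and f₂' homotopic to f₂ has an infinite coincidence set. (Part of Example 1.12.) -/
open scoped Manifold ContinuousMap unitInterval Topology
open CategoryTheory

universe u v

/-- The minimum number of coincidence points, over all pairs of maps homotopic to the
given pair, as a value in `ℕ ∪ {∞}`. -/
noncomputable def MC {M : Type u} {N : Type v} [TopologicalSpace M] [TopologicalSpace N]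
    (f₁ f₂ : C(M, N)) : ℕ∞ :=
  sInf {k : ℕ∞ | ∃ g₁ g₂ : C(M, N), g₁.Homotopic f₁ ∧ g₂.Homotopic f₂ ∧
    k = ({x | g₁ x = g₂ x} : Set M).encard}

/-- The minimum number of path components of the coincidence set, over all pairs of maps
homotopic to the given pair, as a value in `ℕ ∪ {∞}`. -/
noncomputable def MCC {M : Type u} {N : Type v} [TopologicalSpace M] [TopologicalSpace N]
    (f₁ f₂ : C(M, N)) : ℕ∞ :=
  sInf {k : ℕ∞ | ∃ g₁ g₂ : C(M, N), g₁.Homotopic f₁ ∧ g₂.Homotopic f₂ ∧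
    k = ENat.card (ZerothHomotopy {x : M // g₁ x = g₂ x})}

/-- A pair of maps is loose if they can be deformed away from one another,
i.e. they are homotopic to a coincidence free pair. -/
def Loose {M : Type u} {N : Type v} [TopologicalSpace M] [TopologicalSpace N]
    (f₁ f₂ : C(M, N)) : Prop :=
  ∃ g₁ g₂ : C(M, N), g₁.Homotopic f₁ ∧ g₂.Homotopic f₂ ∧ ∀ x : M, g₁ x ≠ g₂ x

/-- The path space `E(f₁, f₂) = {(x, θ) ∈ M × P(N) | θ(0) = f₁(x), θ(1) = f₂(x)}`,
where `P(N)` carries the compact-open topology. -/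
abbrev ESpace {M : Type u} {N : Type v} [TopologicalSpace M] [TopologicalSpace N]
    (f₁ f₂ : C(M, N)) : Type _ :=
  {p : M × C(unitInterval, N) // p.2 0 = f₁ p.1 ∧ p.2 1 = f₂ p.1}

/-- The path space `E(g, y) = {(x, θ) ∈ M × P(Y) | θ(0) = g(x), θ(1) = y}`. -/
abbrev EBase {M : Type u} {Y : Type v} [TopologicalSpace M] [TopologicalSpace Y]
    (g : C(M, Y)) (y : Y) : Type _ :=
  {p : M × C(unitInterval, Y) // p.2 0 = g p.1 ∧ p.2 1 = y}

/-- The unit sphere `S^k ⊆ ℝ^(k+1)`. -/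
abbrev Sph (k : ℕ) : Type := Metric.sphere (0 : EuclideanSpace ℝ (Fin (k + 1))) 1

/-- The homomorphism induced by a continuous map on fundamental groups. -/
noncomputable def π₁map {X Y : Type u} [TopologicalSpace X] [TopologicalSpace Y]
    (f : C(X, Y)) (x : X) :
    FundamentalGroup X x →* FundamentalGroup Y (f x) :=
  CategoryTheory.Functor.mapEnd (⟨x⟩ : FundamentalGroupoid X)
    (show FundamentalGroupoid X ⥤ FundamentalGroupoid Y from
      FundamentalGroupoid.fundamentalGroupoidFunctor.map
        (show TopCat.of X ⟶ TopCat.of Y from TopCat.ofHom f))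

/-- In a real normed space of rank `> 1`, a punctured ball is path-connected. -/
private lemma aux_ball_punct {E : Type*} [NormedAddCommGroup E] [NormedSpace ℝ E]
    (h : 1 < Module.rank ℝ E) (c : E) {r : ℝ} (hr : 0 < r) :
    IsPathConnected (Metric.ball c r \ {c}) := by
  have : Nontrivial E := (rank_pos_iff_nontrivial (R := ℝ)).1 (zero_lt_one.trans h)
  obtain ⟨p, hp⟩ : (Metric.sphere c (r / 2)).Nonempty :=
    NormedSpace.sphere_nonempty.2 (by positivity)
  have hsub : Metric.sphere c (r / 2) ⊆ Metric.ball c r \ {c} := by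
    intro y hy
    rw [Metric.mem_sphere] at hy
    refine ⟨Metric.mem_ball.2 (by rw [hy]; linarith), ?_⟩
    simp only [Set.mem_singleton_iff]
    intro hyc
    rw [hyc, dist_self] at hy
    linarith
  have hsph := isPathConnected_sphere h c (by positivity : (0 : ℝ) ≤ r / 2)
  refine ⟨p, hsub hp, ?_⟩
  intro b hb
  obtain ⟨hball, hbc⟩ := hb
  have hbc' : b ≠ c := by simpa using hbc
  have hd : 0 < dist b c := dist_pos.2 hbc'
  set d := dist b c with hdd
  have hdr : d < r := Metric.mem_ball.1 hball
  set b' := c + (r / (2 * d)) • (b - c) with hb'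
  have hbc'' : b' - c = (r / (2 * d)) • (b - c) := by rw [hb']; abel
  have hb'c : dist b' c = r / 2 := by
    rw [dist_eq_norm, hbc'', norm_smul, Real.norm_eq_abs, abs_of_pos (by positivity),
      ← dist_eq_norm, ← hdd]
    field_simp
  have hseg : segment ℝ b b' ⊆ Metric.ball c r \ {c} := by
    rw [segment_eq_image]
    rintro z ⟨t, ⟨ht0, ht1⟩, rfl⟩
    have hz : ((1 - t) • b + t • b') - c = ((1 - t) + t * (r / (2 * d))) • (b - c) := by
      rw [hb']; module
    have hlam : 0 < (1 - t) + t * (r / (2 * d)) := by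
      rcases eq_or_lt_of_le ht1 with h1 | h1
      · rw [← h1]; simp only [sub_self, zero_add, one_mul]; positivity
      · have : 0 ≤ t * (r / (2 * d)) := mul_nonneg ht0 (by positivity)
        linarith
    have hnorm : ‖((1 - t) • b + t • b') - c‖ = ((1 - t) + t * (r / (2 * d))) * d := by
      rw [hz, norm_smul, Real.norm_eq_abs, abs_of_pos hlam, ← dist_eq_norm, ← hdd]
    have hprod : ((1 - t) + t * (r / (2 * d))) * d = (1 - t) * d + t * (r / 2) := by
      field_simp
    constructor
    · rw [Metric.mem_ball, dist_eq_norm, hnorm, hprod]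
      rcases eq_or_lt_of_le ht0 with h0 | h0
      · rw [← h0]; simpa using hdr
      · have e1 : (1 - t) * d ≤ (1 - t) * r := by nlinarith
        have e2 : t * (r / 2) < t * r := by nlinarith
        nlinarith
    · simp only [Set.mem_singleton_iff]
      intro hzc
      have : ‖((1 - t) • b + t • b') - c‖ = 0 := by rw [hzc]; simp
      rw [hnorm] at this
      nlinarith
  exact ((JoinedIn.of_segment_subset hseg).trans
    ((hsph.joinedIn b' (by rwa [Metric.mem_sphere]) p hp).mono hsub)).symm

private lemma aux_rank {m : ℕ} (hm : 2 ≤ m) :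
    1 < Module.rank ℝ (EuclideanSpace ℝ (Fin m)) := by
  have h1 : (Module.finrank ℝ (EuclideanSpace ℝ (Fin m)) : Cardinal) =
      Module.rank ℝ (EuclideanSpace ℝ (Fin m)) := Module.finrank_eq_rank ℝ _
  rw [← h1]
  have h2 : Module.finrank ℝ (EuclideanSpace ℝ (Fin m)) = m := finrank_euclideanSpace_fin
  rw [h2]
  exact_mod_cast lt_of_lt_of_le one_lt_two hm

/-- If `z` is on the unit circle, has nonnegative real part in the sense below and zero
imaginary part, then `z = 1`. -/
private lemma aux_eq_one {z : ℂ} (habs : ‖z‖ = 1) (hre : 0 < z.re)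
    (him : z.im = 0) : z = 1 := by
  have hz : z = (z.re : ℂ) := Complex.ext rfl (by simp [him])
  rw [hz] at habs
  rw [Complex.norm_real, Real.norm_eq_abs, abs_of_pos hre] at habs
  rw [hz, habs]
  simp

/-- If `|z| = 1` and `z ≠ 1` then `-z` lies in the slit plane. -/
private lemma aux_slit {z : ℂ} (habs : ‖z‖ = 1) (hz : z ≠ 1) :
    -z ∈ Complex.slitPlane := by
  rw [Complex.mem_slitPlane_iff]
  by_cases him : z.im = 0
  · left
    have hz' : z = (z.re : ℂ) := Complex.ext rfl (by simp [him])
    have habs' : |z.re| = 1 := by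
      rw [hz'] at habs
      rwa [Complex.norm_real, Real.norm_eq_abs] at habs
    rcases (abs_eq (by norm_num : (0:ℝ) ≤ 1)).1 habs' with h1 | h1
    · exact absurd (by rw [hz', h1]; simp) hz
    · simp [h1]
  · right
    simpa using him

/-- The local dichotomy: near an isolated point of `{q = 1}` (with `|q| = 1` everywhere),
the imaginary part of `q` has a constant sign on a punctured neighbourhood.  This is where
`2 ≤ m` is used, through connectedness of punctured balls. -/
private lemma aux_dichotomy {m : ℕ} (hm : 2 ≤ m)
    {M : Type u} [TopologicalSpace M] [ChartedSpace (EuclideanSpace ℝ (Fin m)) M]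
    {q : M → ℂ} (hq : Continuous q) (habs : ∀ x, ‖q x‖ = 1)
    (hfin : {x | q x = 1}.Finite) {c : M} (hc : q c = 1) :
    (∀ᶠ x in 𝓝[≠] c, 0 < (q x).im) ∨ (∀ᶠ x in 𝓝[≠] c, (q x).im < 0) := by
  haveI : T1Space M := ChartedSpace.t1Space (EuclideanSpace ℝ (Fin m)) M
  set ψ := chartAt (EuclideanSpace ℝ (Fin m)) c with hψ
  set U₀ : Set M := ψ.source ∩ q ⁻¹' {z | 0 < z.re} ∩ ({x | q x = 1} \ {c})ᶜ with hU₀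
  have hU₀open : IsOpen U₀ := by
    apply IsOpen.inter
    · exact (ψ.open_source.inter (hq.isOpen_preimage _ (isOpen_lt continuous_const
        Complex.continuous_re)))
    · exact (hfin.subset Set.diff_subset).isClosed.isOpen_compl
  have hcU₀ : c ∈ U₀ := by
    refine ⟨⟨ChartedSpace.mem_chart_source c, ?_⟩, ?_⟩
    · simp only [Set.mem_preimage, Set.mem_setOf_eq, hc]
      norm_num
    · simp
  set W' : Set (EuclideanSpace ℝ (Fin m)) := ψ.symm.source ∩ ψ.symm ⁻¹' U₀ with hW'
  have hW'open : IsOpen W' := ψ.symm.isOpen_inter_preimage hU₀open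
  have hψcW' : ψ c ∈ W' := by
    constructor
    · rw [ψ.symm_source]
      exact ψ.map_source (ChartedSpace.mem_chart_source c)
    · rw [Set.mem_preimage, ψ.left_inv (ChartedSpace.mem_chart_source c)]
      exact hcU₀
  obtain ⟨r, hr0, hball⟩ := Metric.isOpen_iff.1 hW'open _ hψcW'
  set V : Set M := ψ.symm '' (Metric.ball (ψ c) r \ {ψ c}) with hV
  have hVprops : ∀ y ∈ V, y ≠ c ∧ 0 < (q y).re ∧ q y ≠ 1 := by
    rintro y ⟨z, ⟨hzball, hzne⟩, rfl⟩
    have hzW' : z ∈ W' := hball hzball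
    have hztarget : z ∈ ψ.target := by rw [← ψ.symm_source]; exact hzW'.1
    have hyU₀ : ψ.symm z ∈ U₀ := hzW'.2
    have hyne : ψ.symm z ≠ c := by
      intro hyc
      apply hzne
      have : ψ (ψ.symm z) = z := ψ.right_inv hztarget
      rw [hyc] at this
      simp [← this]
    refine ⟨hyne, hyU₀.1.2, ?_⟩
    intro hq1
    exact hyU₀.2 ⟨hq1, hyne⟩
  have hVpre : _root_.IsPreconnected V := by
    apply _root_.IsPreconnected.image
    · exact (aux_ball_punct (aux_rank hm) (ψ c) hr0).isConnected.isPreconnected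
    · apply ψ.continuousOn_symm.mono
      intro z hz
      rw [← ψ.symm_source]
      exact (hball hz.1).1
  have hVmem : V ∈ 𝓝[≠] c := by
    rw [mem_nhdsWithin]
    refine ⟨ψ.source ∩ ψ ⁻¹' Metric.ball (ψ c) r, ψ.isOpen_inter_preimage Metric.isOpen_ball,
      ⟨ChartedSpace.mem_chart_source c, by simp [Metric.mem_ball, hr0]⟩, ?_⟩
    rintro y ⟨⟨hysrc, hyball⟩, hyne⟩
    have hyne' : y ≠ c := by simpa using hyne
    refine ⟨ψ y, ⟨hyball, ?_⟩, ψ.left_inv hysrc⟩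
    exact fun hh => hyne' (ψ.injOn hysrc (ChartedSpace.mem_chart_source c) hh)
  -- the image of `V` under `im ∘ q` is preconnected and avoids `0`
  set S : Set ℝ := (fun x => (q x).im) '' V with hS
  have hSpre : _root_.IsPreconnected S :=
    hVpre.image _ (Complex.continuous_im.comp hq).continuousOn
  have hSsub : S ⊆ Set.Iio 0 ∪ Set.Ioi 0 := by
    rintro s ⟨y, hyV, rfl⟩
    obtain ⟨-, hre, hne1⟩ := hVprops y hyV
    rcases lt_trichotomy ((q y).im) 0 with hlt | heq | hgt
    · exact Or.inl hlt
    · exact absurd (aux_eq_one (habs y) hre heq) hne1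
    · exact Or.inr hgt
  have hdisj : Disjoint (Set.Iio (0:ℝ)) (Set.Ioi 0) :=
    Set.disjoint_left.2 fun a ha hb => absurd (Set.mem_Iio.1 ha) (not_lt.2 (le_of_lt hb))
  rcases hSpre.subset_or_subset isOpen_Iio isOpen_Ioi hdisj hSsub with hcase | hcase
  · right
    filter_upwards [hVmem] with x hx
    exact hcase (Set.mem_image_of_mem _ hx)
  · left
    filter_upwards [hVmem] with x hx
    exact hcase (Set.mem_image_of_mem _ hx)

/-- Key step: two maps `M → S¹` with only finitely many coincidences are homotopic
(`2 ≤ m`). -/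
private lemma aux_homotopic {m : ℕ} (hm : 2 ≤ m)
    {M : Type u} [TopologicalSpace M] [ChartedSpace (EuclideanSpace ℝ (Fin m)) M]
    (g₁ g₂ : C(M, Sph 1)) (hfin : ({x | g₁ x = g₂ x} : Set M).Finite) :
    g₁.Homotopic g₂ := by
  classical
  haveI : T1Space M := ChartedSpace.t1Space (EuclideanSpace ℝ (Fin m)) M
  set e := Complex.orthonormalBasisOneI.repr with he
  set u : M → ℂ := fun x => e.symm ((g₁ x : EuclideanSpace ℝ (Fin 2))) with hu
  set v : M → ℂ := fun x => e.symm ((g₂ x : EuclideanSpace ℝ (Fin 2))) with hv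
  have hucont : Continuous u :=
    e.symm.continuous.comp (continuous_subtype_val.comp g₁.continuous)
  have hvcont : Continuous v :=
    e.symm.continuous.comp (continuous_subtype_val.comp g₂.continuous)
  have hunorm : ∀ x, ‖u x‖ = 1 := by
    intro x
    have h1 : ‖(g₁ x : EuclideanSpace ℝ (Fin 2))‖ = 1 :=
      mem_sphere_zero_iff_norm.1 (g₁ x).2
    rw [hu]
    simpa using h1
  have hvnorm : ∀ x, ‖v x‖ = 1 := by
    intro x
    have h1 : ‖(g₂ x : EuclideanSpace ℝ (Fin 2))‖ = 1 :=
      mem_sphere_zero_iff_norm.1 (g₂ x).2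
    rw [hv]
    simpa using h1
  set q : M → ℂ := fun x => u x * (starRingEnd ℂ) (v x) with hqdef
  have hqcont : Continuous q := hucont.mul (Complex.continuous_conj.comp hvcont)
  have hqabs : ∀ x, ‖q x‖ = 1 := by
    intro x
    rw [hqdef]
    simp only [norm_mul, Complex.norm_conj, hunorm, hvnorm, mul_one]
  have hvv : ∀ x, (starRingEnd ℂ) (v x) * v x = 1 := by
    intro x
    rw [mul_comm, Complex.mul_conj, Complex.normSq_eq_norm_sq, hvnorm]
    norm_num
  have hq1 : ∀ x, q x = 1 ↔ g₁ x = g₂ x := by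
    intro x
    constructor
    · intro hh
      have hconjne : (starRingEnd ℂ) (v x) ≠ 0 := by
        intro h0
        have := hvv x
        rw [h0, zero_mul] at this
        exact one_ne_zero this.symm
      have huv : u x = v x := by
        have h2 : u x * (starRingEnd ℂ) (v x) = v x * (starRingEnd ℂ) (v x) := by
          rw [show v x * (starRingEnd ℂ) (v x) = 1 from by rw [mul_comm]; exact hvv x]
          exact hh
        exact mul_right_cancel₀ hconjne h2
      have := e.symm.injective huv
      exact Subtype.ext this
    · intro hgg
      have huvx : u x = v x := by simp only [hu, hv, hgg]
      show u x * (starRingEnd ℂ) (v x) = 1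
      rw [huvx, mul_comm]
      exact hvv x
  have hCfin : {x | q x = 1}.Finite := by
    have : {x | q x = 1} = {x | g₁ x = g₂ x} := Set.ext hq1
    rw [this]; exact hfin
  -- the sign choice at each coincidence point
  set P : M → Prop := fun c => ∀ᶠ x in 𝓝[≠] c, 0 < (q x).im with hP
  -- the global lift
  set φ : M → ℝ := fun x => if q x = 1 ∧ P x then 0 else Real.pi + (-(q x)).arg with hφ
  have hexp : ∀ x, Complex.exp ((φ x : ℂ) * Complex.I) = q x := by
    intro x
    by_cases hx : q x = 1 ∧ P x
    · rw [hφ]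
      simp only [if_pos hx]
      rw [hx.1]
      simp
    · have hval : φ x = Real.pi + (-(q x)).arg := by rw [hφ]; simp only [if_neg hx]
      rw [hval]
      have habsneg : ‖-(q x)‖ = 1 := by
        rw [norm_neg]
        exact hqabs x
      have hexp1 : Complex.exp (((-(q x)).arg : ℂ) * Complex.I) = -(q x) := by
        have h3 := Complex.norm_mul_exp_arg_mul_I (-(q x))
        rw [habsneg] at h3
        simpa using h3
      push_cast
      rw [add_mul, Complex.exp_add, Complex.exp_pi_mul_I, hexp1]
      ring
  -- continuity of the lift
  have hCopen : IsOpen {x | q x ≠ 1} := by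
    have : {x | q x ≠ 1} = {x | q x = 1}ᶜ := rfl
    rw [this]
    exact hCfin.isClosed.isOpen_compl
  have hargq : ∀ x₀, q x₀ = 1 → Filter.Tendsto (fun x => (q x).arg) (𝓝 x₀) (𝓝 0) := by
    intro x₀ hx₀
    have hslit : q x₀ ∈ Complex.slitPlane := by
      rw [hx₀, Complex.mem_slitPlane_iff]
      norm_num
    have := (Complex.continuousAt_arg hslit).tendsto.comp hqcont.continuousAt
    rwa [Function.comp_def, hx₀, Complex.arg_one] at this
  have hφcont : Continuous φ := by
    rw [continuous_iff_continuousAt]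
    intro x₀
    by_cases hx₀ : q x₀ = 1
    · -- coincidence point: use the dichotomy
      rw [ContinuousAt, ← nhdsNE_sup_pure x₀, Filter.tendsto_sup]
      by_cases hPx₀ : P x₀
      · have hval : φ x₀ = 0 := by rw [hφ]; simp only [if_pos (And.intro hx₀ hPx₀)]
        constructor
        · rw [hval]
          apply Filter.Tendsto.congr' _ ((hargq x₀ hx₀).mono_left nhdsWithin_le_nhds)
          filter_upwards [hPx₀] with x hx
          have hne1 : q x ≠ 1 := by
            intro h1
            rw [h1] at hx
            simp at hx
          rw [hφ]
          simp only [if_neg (fun hc : q x = 1 ∧ P x => hne1 hc.1)]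
          rw [Complex.arg_neg_eq_arg_sub_pi_of_im_pos hx]
          ring
        · exact tendsto_pure_nhds φ x₀
      · have hdich := (aux_dichotomy hm hqcont hqabs hCfin hx₀).resolve_left hPx₀
        have hval : φ x₀ = 2 * Real.pi := by
          rw [hφ]
          simp only [if_neg (fun hc : q x₀ = 1 ∧ P x₀ => hPx₀ hc.2)]
          rw [hx₀]
          rw [Complex.arg_neg_one]
          ring
        constructor
        · rw [hval]
          have hbase : Filter.Tendsto (fun x => 2 * Real.pi + (q x).arg) (𝓝[≠] x₀)
              (𝓝 (2 * Real.pi)) := by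
            have := (tendsto_const_nhds (x := 2 * Real.pi)).add
              ((hargq x₀ hx₀).mono_left (nhdsWithin_le_nhds (s := {x₀}ᶜ)))
            simpa using this
          apply Filter.Tendsto.congr' _ hbase
          filter_upwards [hdich] with x hx
          have hne1 : q x ≠ 1 := by
            intro h1
            rw [h1] at hx
            simp at hx
          rw [hφ]
          simp only [if_neg (fun hc : q x = 1 ∧ P x => hne1 hc.1)]
          rw [Complex.arg_neg_eq_arg_add_pi_of_im_neg hx]
          ring
        · exact tendsto_pure_nhds φ x₀
    · -- regular point
      have hslit := aux_slit (hqabs x₀) hx₀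
      have hca : ContinuousAt (fun x => Real.pi + (-(q x)).arg) x₀ :=
        continuousAt_const.add (ContinuousAt.comp (g := Complex.arg)
          (f := fun x => -(q x)) (Complex.continuousAt_arg hslit)
          hqcont.neg.continuousAt)
      apply hca.congr
      filter_upwards [hCopen.mem_nhds hx₀] with y hy
      rw [hφ]
      simp only [if_neg (fun hc : q y = 1 ∧ P y => hy hc.1)]
  -- build the homotopy
  have hmem : ∀ z : ℂ, ‖z‖ = 1 →
      e z ∈ Metric.sphere (0 : EuclideanSpace ℝ (Fin 2)) 1 := by
    intro z hz
    rw [mem_sphere_zero_iff_norm]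
    rw [e.norm_map, hz]
  have hcF : Continuous fun p : unitInterval × M =>
      Complex.exp ((((p.1 : ℝ) * φ p.2 : ℝ) : ℂ) * Complex.I) * v p.2 := by
    have c1 : Continuous fun p : unitInterval × M => ((p.1 : ℝ) * φ p.2 : ℝ) :=
      (continuous_subtype_val.comp continuous_fst).mul (hφcont.comp continuous_snd)
    exact (Complex.continuous_exp.comp ((Complex.continuous_ofReal.comp c1).mul
      continuous_const)).mul (hvcont.comp continuous_snd)
  have habsF : ∀ p : unitInterval × M,
      ‖Complex.exp ((((p.1 : ℝ) * φ p.2 : ℝ) : ℂ) * Complex.I) * v p.2‖ = 1 := by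
    intro p
    rw [norm_mul, Complex.norm_exp_ofReal_mul_I, hvnorm, one_mul]
  refine ContinuousMap.Homotopic.symm ⟨?_⟩
  refine {
    toContinuousMap := ⟨fun p => ⟨e (Complex.exp ((((p.1 : ℝ) * φ p.2 : ℝ) : ℂ) *
      Complex.I) * v p.2), hmem _ (habsF p)⟩, (e.continuous.comp hcF).subtype_mk _⟩,
    map_zero_left := ?_, map_one_left := ?_ }
  · intro x
    apply Subtype.ext
    show e (Complex.exp ((((0 : unitInterval) : ℝ) * φ x : ℝ) * Complex.I) * v x) = _
    rw [Set.Icc.coe_zero, zero_mul]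
    simp only [Complex.ofReal_zero, zero_mul, Complex.exp_zero, one_mul]
    rw [hv]
    exact e.apply_symm_apply _
  · intro x
    apply Subtype.ext
    show e (Complex.exp ((((1 : unitInterval) : ℝ) * φ x : ℝ) * Complex.I) * v x) = _
    rw [Set.Icc.coe_one, one_mul, hexp x]
    rw [hqdef]
    simp only
    rw [mul_assoc, hvv x, mul_one, hu]
    exact e.apply_symm_apply _

variable {m : ℕ}
variable {M : Type u} [TopologicalSpace M] [ChartedSpace (EuclideanSpace ℝ (Fin m)) M]
  [IsManifold (𝓡 m) (⊤ : ℕ∞) M] [CompactSpace M] [ConnectedSpace M]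

/-- Part of Example 1.12: for `m ≥ 2` and non-homotopic maps `f₁ f₂ : M → S¹`,
`MC(f₁,f₂) = ∞`. -/
theorem MC_eq_top_circle_target (hm : 2 ≤ m) (f₁ f₂ : C(M, Sph 1))
    (h : ¬f₁.Homotopic f₂) : MC f₁ f₂ = ⊤ := by
  rw [MC, sInf_eq_top]
  rintro k ⟨g₁, g₂, h₁, h₂, rfl⟩
  by_contra hk
  have hfin : ({x | g₁ x = g₂ x} : Set M).Finite := Set.encard_ne_top_iff.1 hk
  exact h (h₁.symm.trans ((aux_homotopic hm g₁ g₂ hfin).trans h₂))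
end

section
/- Let m ≥ 1 and let N = N₁ × N₂ be the product of two smooth connected manifolds without boundary of strictly positive dimensions. Then every pair of continuous maps f₁, f₂ : S^m → N is loose; in particular every continuous map S^m → N₁ × N₂ is homotopic to a map whose image misses any given point of N₁ × N₂. (Part of Corollary 6.3 and its proof.) -/
open scoped Manifold ContinuousMap unitInterval Topology
open CategoryTheory

universe u v

noncomputable section LooseAux

/-- latitude reparametrization -/
def colA (s t : ℝ) : ℝ := t + s * (|t| - 1)

/-- longitude scaling factor -/
def colC (s t : ℝ) : ℝ :=
  if 0 ≤ t then Real.sqrt ((1 + s) * (1 + colA s t) / (1 + max t 0))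
  else Real.sqrt ((1 - s) * (1 - colA s t) / (1 - min t 0))

lemma colA_cont : Continuous fun q : ℝ × ℝ => colA q.1 q.2 := by
  unfold colA; fun_prop

lemma colC_cont : Continuous fun q : ℝ × ℝ => colC q.1 q.2 := by
  unfold colC
  simp only [colA]
  apply Continuous.if_le
  · apply Real.continuous_sqrt.comp
    apply Continuous.div
    · fun_prop
    · fun_prop
    · intro q
      have : (0:ℝ) ≤ max q.2 0 := le_max_right _ _
      positivity
  · apply Real.continuous_sqrt.comp
    apply Continuous.div
    · fun_prop
    · fun_prop
    · intro q
      have : min q.2 0 ≤ 0 := min_le_right _ _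
      nlinarith
  · fun_prop
  · fun_prop
  · rintro ⟨s, t⟩ ht
    have ht' : t = 0 := ht.symm
    subst ht'
    simp [colA]
    ring_nf

lemma colA_zero (t : ℝ) : colA 0 t = t := by simp [colA]

lemma colC_zero (t : ℝ) : colC 0 t = 1 := by
  unfold colC colA
  rcases le_or_gt 0 t with h | h
  · rw [if_pos h, max_eq_left h]
    rw [show (1 + (0:ℝ)) * (1 + (t + 0 * (|t| - 1))) = 1 + t by ring]
    rw [div_self (by positivity)]
    exact Real.sqrt_one
  · rw [if_neg (not_le.mpr h), min_eq_left h.le]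
    rw [show (1 - (0:ℝ)) * (1 - (t + 0 * (|t| - 1))) = 1 - t by ring]
    rw [div_self (by nlinarith)]
    exact Real.sqrt_one

lemma colA_one_nonpos {t : ℝ} (ht : t ≤ 0) : colA 1 t = -1 := by
  rw [colA, abs_of_nonpos ht]; ring

lemma colC_one_nonpos {t : ℝ} (ht : t ≤ 0) : colC 1 t = 0 := by
  unfold colC
  rcases lt_or_eq_of_le ht with h | h
  · rw [if_neg (not_le.mpr h)]
    rw [show (1 - (1:ℝ)) * (1 - colA 1 t) = 0 by ring, zero_div, Real.sqrt_zero]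
  · subst h
    rw [if_pos le_rfl, colA_one_nonpos le_rfl]
    norm_num

/-- The key identity: the image point lies on the sphere. -/
lemma col_key {s t : ℝ} (hs0 : 0 ≤ s) (hs1 : s ≤ 1) (ht : |t| ≤ 1) :
    (colC s t) ^ 2 * (1 - t ^ 2) = 1 - (colA s t) ^ 2 := by
  obtain ⟨ht1, ht2⟩ := abs_le.mp ht
  rcases le_or_gt 0 t with h | h
  · have hA : colA s t = t + s * (t - 1) := by rw [colA, abs_of_nonneg h]
    have h1 : (0:ℝ) < 1 + t := by linarith
    have hA' : 0 ≤ 1 + colA s t := by rw [hA]; nlinarith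
    have hnum : 0 ≤ (1 + s) * (1 + colA s t) := by nlinarith
    rw [colC, if_pos h, max_eq_left h, Real.sq_sqrt (div_nonneg hnum (by linarith))]
    rw [div_mul_eq_mul_div, div_eq_iff (ne_of_gt h1), hA]
    ring
  · have hA : colA s t = t + s * (-t - 1) := by rw [colA, abs_of_neg h]
    have h1 : (0:ℝ) < 1 - t := by linarith
    have hA' : 0 ≤ 1 - colA s t := by rw [hA]; nlinarith
    have hnum : 0 ≤ (1 - s) * (1 - colA s t) := by nlinarith
    rw [colC, if_neg (not_le.mpr h), min_eq_left h.le,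
      Real.sq_sqrt (div_nonneg hnum (by linarith))]
    rw [div_mul_eq_mul_div, div_eq_iff (ne_of_gt h1), hA]
    ring

end LooseAux

open scoped RealInnerProductSpace
set_option maxHeartbeats 1000000

namespace LooseAux

/-- Ambient Euclidean space of the `m`-sphere. -/
abbrev Esp (m : ℕ) : Type := EuclideanSpace ℝ (Fin (m + 1))

/-- The north pole direction. -/
noncomputable def sphE (m : ℕ) : Esp m := EuclideanSpace.single (Fin.last m) (1 : ℝ)

lemma norm_sphE (m : ℕ) : ‖sphE m‖ = 1 := by
  rw [sphE, EuclideanSpace.norm_single]; norm_num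

/-- The raw collapsing map in ambient coordinates. -/
noncomputable def araw (m : ℕ) (s : ℝ) (x : Esp m) : Esp m :=
  colC s ⟪x, sphE m⟫ • (x - ⟪x, sphE m⟫ • sphE m) + colA s ⟪x, sphE m⟫ • sphE m

lemma araw_cont (m : ℕ) : Continuous fun p : ℝ × Esp m => araw m p.1 p.2 := by
  unfold araw
  have ht : Continuous fun p : ℝ × Esp m => ⟪p.2, sphE m⟫ :=
    Continuous.inner continuous_snd continuous_const
  have h1 : Continuous fun p : ℝ × Esp m => colC p.1 ⟪p.2, sphE m⟫ :=
    colC_cont.comp (continuous_fst.prodMk ht)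
  have h2 : Continuous fun p : ℝ × Esp m => colA p.1 ⟪p.2, sphE m⟫ :=
    colA_cont.comp (continuous_fst.prodMk ht)
  exact (h1.smul (continuous_snd.sub (ht.smul continuous_const))).add
    (h2.smul continuous_const)

lemma araw_norm (m : ℕ) {s : ℝ} (hs0 : 0 ≤ s) (hs1 : s ≤ 1) {x : Esp m} (hx : ‖x‖ = 1) :
    ‖araw m s x‖ = 1 := by
  set e := sphE m with he_def
  have he : ‖e‖ = 1 := norm_sphE m
  set t := ⟪x, e⟫ with ht_def
  have hee : ⟪e, e⟫ = 1 := by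
    rw [real_inner_self_eq_norm_sq, he]; norm_num
  have habs : |t| ≤ 1 := by
    calc |t| ≤ ‖x‖ * ‖e‖ := abs_real_inner_le_norm x e
    _ = 1 := by rw [hx, he, one_mul]
  have horth : ⟪x - t • e, e⟫ = 0 := by
    rw [inner_sub_left, real_inner_smul_left, hee]; ring
  have hsub : ‖x - t • e‖ ^ 2 = 1 - t ^ 2 := by
    rw [norm_sub_sq_real, real_inner_smul_right, norm_smul, hx, he]
    simp [ht_def, sq_abs]
    ring
  have hmain : ‖araw m s x‖ ^ 2 = 1 := by
    rw [araw, ← he_def, ← ht_def, norm_add_sq_real]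
    rw [real_inner_smul_left, real_inner_smul_right, horth]
    rw [norm_smul, norm_smul, mul_pow, mul_pow, Real.norm_eq_abs, Real.norm_eq_abs, sq_abs, sq_abs, hsub, he]
    rw [col_key hs0 hs1 habs]
    ring
  calc ‖araw m s x‖ = Real.sqrt (‖araw m s x‖ ^ 2) := (Real.sqrt_sq (norm_nonneg _)).symm
  _ = 1 := by rw [hmain, Real.sqrt_one]

lemma araw_zero (m : ℕ) (x : Esp m) : araw m 0 x = x := by
  rw [araw, colC_zero, colA_zero, one_smul, sub_add_cancel]

lemma araw_one_nonpos (m : ℕ) {x : Esp m} (hx : ⟪x, sphE m⟫ ≤ 0) :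
    araw m 1 x = -sphE m := by
  rw [araw, colC_one_nonpos hx, colA_one_nonpos hx, zero_smul, zero_add, neg_one_smul]

lemma mem_sph {m : ℕ} {x : Esp m} (hx : ‖x‖ = 1) : x ∈ Metric.sphere (0 : Esp m) 1 :=
  mem_sphere_zero_iff_norm.mpr hx

/-- South pole. -/
noncomputable def southP (m : ℕ) : Sph m :=
  ⟨-sphE m, mem_sph (by rw [norm_neg]; exact norm_sphE m)⟩

/-- North pole. -/
noncomputable def northP (m : ℕ) : Sph m := ⟨sphE m, mem_sph (norm_sphE m)⟩

lemma sph_norm {m : ℕ} (x : Sph m) : ‖(x : Esp m)‖ = 1 :=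
  mem_sphere_zero_iff_norm.mp x.2

/-- The collapsing map: squashes the southern hemisphere to the south pole. -/
noncomputable def collapseMap (m : ℕ) : C(Sph m, Sph m) :=
  ⟨fun x => ⟨araw m 1 x, mem_sph (araw_norm m zero_le_one le_rfl (sph_norm x))⟩,
    Continuous.subtype_mk
      ((araw_cont m).comp (continuous_const.prodMk continuous_subtype_val)) _⟩

/-- Homotopy from the identity to the collapsing map. -/
noncomputable def collapseHomotopy (m : ℕ) :
    ContinuousMap.Homotopy (ContinuousMap.id (Sph m)) (collapseMap m) where
  toFun p := ⟨araw m p.1 p.2,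
    mem_sph (araw_norm m p.1.2.1 p.1.2.2 (sph_norm p.2))⟩
  continuous_toFun :=
    Continuous.subtype_mk
      ((araw_cont m).comp
        ((continuous_subtype_val.comp continuous_fst).prodMk
          (continuous_subtype_val.comp continuous_snd))) _
  map_zero_left x := Subtype.ext (by
    show araw m ((0 : unitInterval) : ℝ) (x : Esp m) = (x : Esp m)
    rw [show ((0 : unitInterval) : ℝ) = 0 from rfl, araw_zero])
  map_one_left x := Subtype.ext rfl

lemma collapseMap_homotopic (m : ℕ) :
    (collapseMap m).Homotopic (ContinuousMap.id (Sph m)) :=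
  ⟨(collapseHomotopy m).symm⟩

lemma collapseMap_south (m : ℕ) (x : Sph m) (hx : ⟪(x : Esp m), sphE m⟫ ≤ 0) :
    collapseMap m x = southP m := by
  apply Subtype.ext
  exact araw_one_nonpos m hx

/-- The antipodal map on the sphere. -/
noncomputable def negMap (m : ℕ) : C(Sph m, Sph m) :=
  ⟨fun x => ⟨-(x : Esp m), mem_sph (by rw [norm_neg]; exact sph_norm x)⟩,
    Continuous.subtype_mk continuous_subtype_val.neg _⟩

/-- The anticollapse: squashes the northern hemisphere to the north pole. -/
noncomputable def anticollapseMap (m : ℕ) : C(Sph m, Sph m) :=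
  (negMap m).comp ((collapseMap m).comp (negMap m))

lemma anticollapseMap_homotopic (m : ℕ) :
    (anticollapseMap m).Homotopic (ContinuousMap.id (Sph m)) := by
  have h2 := ContinuousMap.Homotopic.comp (collapseMap_homotopic m) (ContinuousMap.Homotopic.refl (negMap m))
  have h3 := ContinuousMap.Homotopic.comp (ContinuousMap.Homotopic.refl (negMap m)) h2
  have he : (negMap m).comp ((ContinuousMap.id (Sph m)).comp (negMap m)) =
      ContinuousMap.id (Sph m) := by
    apply ContinuousMap.ext
    intro x
    exact Subtype.ext (neg_neg (x : Esp m))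
  rw [anticollapseMap]
  rwa [he] at h3

lemma anticollapseMap_north (m : ℕ) (x : Sph m) (hx : 0 ≤ ⟪(x : Esp m), sphE m⟫) :
    anticollapseMap m x = northP m := by
  have h1 : ⟪((negMap m x : Sph m) : Esp m), sphE m⟫ ≤ 0 := by
    show ⟪-(x : Esp m), sphE m⟫ ≤ 0
    rw [inner_neg_left]
    linarith
  show negMap m (collapseMap m (negMap m x)) = northP m
  rw [collapseMap_south m _ h1]
  apply Subtype.ext
  exact neg_neg _

end LooseAux

namespace LooseAux

lemma shift_ne {m : ℕ} {d : Esp m} (hd : ‖d‖ < 1) {s : ℝ} (hs0 : 0 ≤ s) (hs1 : s ≤ 1)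
    (x : Sph m) : (x : Esp m) + s • d ≠ 0 := by
  intro h
  have h1 : ‖(x : Esp m)‖ = ‖s • d‖ := by
    have : (x : Esp m) = -(s • d) := by linear_combination (norm := module) h
    rw [this, norm_neg]
  rw [sph_norm x, norm_smul, Real.norm_eq_abs, abs_of_nonneg hs0] at h1
  nlinarith [norm_nonneg d]

lemma shift_norm {m : ℕ} {d : Esp m} (hd : ‖d‖ < 1) {s : ℝ} (hs0 : 0 ≤ s) (hs1 : s ≤ 1)
    (x : Sph m) : ‖‖(x : Esp m) + s • d‖⁻¹ • ((x : Esp m) + s • d)‖ = 1 := by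
  have h := shift_ne hd hs0 hs1 x
  rw [norm_smul, Real.norm_eq_abs, abs_of_nonneg (inv_nonneg.mpr (norm_nonneg _))]
  rw [inv_mul_cancel₀ (norm_ne_zero_iff.mpr h)]

/-- Normalized shift by a small vector, as a self-map of the sphere. -/
noncomputable def shiftMap {m : ℕ} (d : Esp m) (hd : ‖d‖ < 1) : C(Sph m, Sph m) :=
  ⟨fun x => ⟨‖(x : Esp m) + d‖⁻¹ • ((x : Esp m) + d),
      mem_sph (by simpa using shift_norm hd zero_le_one le_rfl x)⟩,
    Continuous.subtype_mk
      (by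
        have h1 : Continuous fun x : Sph m => (x : Esp m) + d :=
          continuous_subtype_val.add continuous_const
        have h2 : Continuous fun x : Sph m => ‖(x : Esp m) + d‖⁻¹ :=
          (h1.norm).inv₀ fun x =>
            norm_ne_zero_iff.mpr (by simpa using shift_ne hd zero_le_one le_rfl x)
        exact h2.smul h1) _⟩

/-- The shift map is homotopic to the identity. -/
noncomputable def shiftHomotopy {m : ℕ} (d : Esp m) (hd : ‖d‖ < 1) :
    ContinuousMap.Homotopy (ContinuousMap.id (Sph m)) (shiftMap d hd) where
  toFun p := ⟨‖(p.2 : Esp m) + (p.1 : ℝ) • d‖⁻¹ • ((p.2 : Esp m) + (p.1 : ℝ) • d),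
      mem_sph (shift_norm hd p.1.2.1 p.1.2.2 p.2)⟩
  continuous_toFun :=
    Continuous.subtype_mk
      (by
        have h1 : Continuous fun p : unitInterval × Sph m =>
            (p.2 : Esp m) + (p.1 : ℝ) • d :=
          (continuous_subtype_val.comp continuous_snd).add
            (((continuous_subtype_val.comp continuous_fst)).smul continuous_const)
        have h2 : Continuous fun p : unitInterval × Sph m =>
            ‖(p.2 : Esp m) + (p.1 : ℝ) • d‖⁻¹ :=
          (h1.norm).inv₀ fun p =>
            norm_ne_zero_iff.mpr (shift_ne hd p.1.2.1 p.1.2.2 p.2)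
        exact h2.smul h1) _
  map_zero_left x := Subtype.ext (by
    show ‖(x : Esp m) + ((0 : unitInterval) : ℝ) • d‖⁻¹ •
        ((x : Esp m) + ((0 : unitInterval) : ℝ) • d) = (x : Esp m)
    rw [show ((0 : unitInterval) : ℝ) = 0 from rfl, zero_smul, add_zero, sph_norm x]
    rw [inv_one, one_smul])
  map_one_left x := Subtype.ext (by
    show ‖(x : Esp m) + ((1 : unitInterval) : ℝ) • d‖⁻¹ •
        ((x : Esp m) + ((1 : unitInterval) : ℝ) • d) =
      ‖(x : Esp m) + d‖⁻¹ • ((x : Esp m) + d)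
    rw [show ((1 : unitInterval) : ℝ) = 1 from rfl, one_smul])

lemma connectedSpace_sph {m : ℕ} (hm : 1 ≤ m) : ConnectedSpace (Sph m) := by
  have hrank : 1 < Module.rank ℝ (Esp m) := by
    rw [← Module.finrank_eq_rank, finrank_euclideanSpace_fin]
    exact_mod_cast Nat.lt_of_lt_of_le Nat.one_lt_two (by omega)
  exact isConnected_iff_connectedSpace.mp (isConnected_sphere hrank 0 zero_le_one)

/-- Any point of the sphere can be dragged to any other point by a self-map
homotopic to the identity. -/
theorem exists_drag {m : ℕ} (hm : 1 ≤ m) (z p : Sph m) :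
    ∃ T : C(Sph m, Sph m), T.Homotopic (ContinuousMap.id (Sph m)) ∧ T z = p := by
  haveI : ConnectedSpace (Sph m) := connectedSpace_sph hm
  set P : Set (Sph m) :=
    {p | ∃ T : C(Sph m, Sph m), T.Homotopic (ContinuousMap.id (Sph m)) ∧ T z = p} with hP
  have step : ∀ p q : Sph m, dist q p < 1 → p ∈ P → q ∈ P := by
    intro p q hdist hp
    obtain ⟨T, hT, hTz⟩ := hp
    have hd : ‖(q : Esp m) - (p : Esp m)‖ < 1 := by
      rwa [← dist_eq_norm, ← Subtype.dist_eq]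
    refine ⟨(shiftMap _ hd).comp T, ?_, ?_⟩
    · have h := ContinuousMap.Homotopic.comp (ContinuousMap.Homotopic.refl (shiftMap _ hd)) hT
      have h2 : (shiftMap _ hd).Homotopic (ContinuousMap.id (Sph m)) :=
        ⟨(shiftHomotopy _ hd).symm⟩
      have h3 := ContinuousMap.Homotopic.comp h2 hT
      rwa [ContinuousMap.id_comp] at h3
    · show shiftMap _ hd (T z) = q
      rw [hTz]
      apply Subtype.ext
      show ‖(p : Esp m) + ((q : Esp m) - (p : Esp m))‖⁻¹ •
          ((p : Esp m) + ((q : Esp m) - (p : Esp m))) = (q : Esp m)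
      rw [add_sub_cancel, sph_norm q, inv_one, one_smul]
  have hopen : IsOpen P := by
    rw [Metric.isOpen_iff]
    intro p hp
    exact ⟨1, one_pos, fun q hq => step p q (Metric.mem_ball.mp hq) hp⟩
  have hclosed : IsClosed P := by
    rw [← isOpen_compl_iff, Metric.isOpen_iff]
    intro p hp
    refine ⟨1, one_pos, fun q hq hq' => hp ?_⟩
    exact step q p (by rw [dist_comm]; exact Metric.mem_ball.mp hq) hq'
  have hne : P.Nonempty := ⟨z, ContinuousMap.id (Sph m), ContinuousMap.Homotopic.refl _, rfl⟩
  have : P = Set.univ := (IsClopen.eq_univ ⟨hclosed, hopen⟩ hne)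
  have := this ▸ Set.mem_univ p
  exact this

end LooseAux

namespace LooseAux

/-- In a charted space modeled on a positive-dimensional Euclidean space, every point
has a distinct point joined to it by a path. -/
theorem exists_ne_joined {n : ℕ} (hn : 1 ≤ n) {N : Type*} [TopologicalSpace N]
    [ChartedSpace (EuclideanSpace ℝ (Fin n)) N] (a : N) :
    ∃ b : N, b ≠ a ∧ Joined a b := by
  set φ := chartAt (EuclideanSpace ℝ (Fin n)) a with hφ
  have hs : a ∈ φ.source := mem_chart_source _ a
  have hy : φ a ∈ φ.target := φ.map_source hs
  obtain ⟨ε, hε, hball⟩ := Metric.isOpen_iff.mp φ.open_target (φ a) hy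
  set d : EuclideanSpace ℝ (Fin n) := (ε / 2) • EuclideanSpace.single (⟨0, hn⟩ : Fin n) 1
    with hd
  have hnd : ‖d‖ = ε / 2 := by
    rw [hd, norm_smul, EuclideanSpace.norm_single, Real.norm_eq_abs,
      abs_of_pos (by linarith)]
    norm_num
  have hmem : ∀ t : ℝ, 0 ≤ t → t ≤ 1 → φ a + t • d ∈ φ.target := by
    intro t ht0 ht1
    apply hball
    rw [Metric.mem_ball, dist_eq_norm, add_sub_cancel_left, norm_smul, hnd,
      Real.norm_eq_abs, abs_of_nonneg ht0]
    nlinarith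
  set b := φ.symm (φ a + d) with hb
  have hbmem : φ a + d ∈ φ.target := by
    have := hmem 1 zero_le_one le_rfl
    rwa [one_smul] at this
  refine ⟨b, ?_, ?_⟩
  · intro hba
    have h1 : φ b = φ a + d := φ.right_inv hbmem
    rw [hba] at h1
    have h2 : d = 0 := by
      have := h1.symm
      rwa [add_eq_left] at this
    rw [h2, norm_zero] at hnd
    linarith
  · refine ⟨⟨⟨fun t => φ.symm (φ a + (t : ℝ) • d), ?_⟩, ?_, ?_⟩⟩
    · apply φ.continuousOn_symm.comp_continuous
      · exact continuous_const.add (continuous_subtype_val.smul continuous_const)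
      · exact fun t => hmem t t.2.1 t.2.2
    · show φ.symm (φ a + ((0 : unitInterval) : ℝ) • d) = a
      rw [show ((0 : unitInterval) : ℝ) = 0 from rfl, zero_smul, add_zero]
      exact φ.left_inv hs
    · show φ.symm (φ a + ((1 : unitInterval) : ℝ) • d) = b
      rw [show ((1 : unitInterval) : ℝ) = 1 from rfl, one_smul]

lemma const_homotopic {X Y : Type*} [TopologicalSpace X] [TopologicalSpace Y] {a b : Y}
    (h : Joined a b) :
    (ContinuousMap.const X a).Homotopic (ContinuousMap.const X b) := by
  obtain ⟨γ⟩ := h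
  exact ⟨{ toFun := fun p => γ p.1
           continuous_toFun := γ.continuous.comp continuous_fst
           map_zero_left := fun x => γ.source
           map_one_left := fun x => γ.target }⟩

lemma prodMk_comp_eq {X Y Z : Type*} [TopologicalSpace X] [TopologicalSpace Y]
    [TopologicalSpace Z] (f : C(X, Y × Z)) :
    ContinuousMap.prodMk (ContinuousMap.fst.comp f) (ContinuousMap.snd.comp f) = f :=
  ContinuousMap.ext fun _ => rfl

/-- A self map of the sphere of the form `T ∘ collapse` with `T ≃ id` is homotopic to
the identity, hence precomposition with it preserves homotopy classes. -/
lemma comp_collapse_homotopic {m : ℕ} {Y : Type*} [TopologicalSpace Y]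
    (h : C(Sph m, Y)) {A T : C(Sph m, Sph m)}
    (hA : A.Homotopic (ContinuousMap.id (Sph m)))
    (hT : T.Homotopic (ContinuousMap.id (Sph m))) :
    (h.comp (T.comp A)).Homotopic h := by
  have h1 := ContinuousMap.Homotopic.comp hT hA
  rw [ContinuousMap.id_comp] at h1
  have h2 := ContinuousMap.Homotopic.comp (ContinuousMap.Homotopic.refl h) h1
  rwa [ContinuousMap.comp_id] at h2

end LooseAux

namespace LooseAux

universe u'

variable {m n₁ n₂ : ℕ}
variable {N₁ : Type u'} [TopologicalSpace N₁] [ChartedSpace (EuclideanSpace ℝ (Fin n₁)) N₁]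
variable {N₂ : Type u'} [TopologicalSpace N₂] [ChartedSpace (EuclideanSpace ℝ (Fin n₂)) N₂]

theorem key_lemma (hm : 1 ≤ m) (h₁ : 1 ≤ n₁) (h₂ : 1 ≤ n₂) (f₁ f₂ : C(Sph m, N₁ × N₂)) :
    ∃ g₁ g₂ : C(Sph m, N₁ × N₂), g₁.Homotopic f₁ ∧ g₂.Homotopic f₂ ∧
      (∀ x, g₁ x ≠ g₂ x) ∧ ∀ z : N₁ × N₂, (∀ x, f₂ x = z) → ∀ x, g₂ x = z := by
  classical
  set x₀ : Sph m := southP m with hx₀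
  by_cases hU : ∀ p q : Sph m, (f₁ p).1 = (f₂ q).1
  · -- both first components are the same constant
    set a : N₁ := (f₂ x₀).1 with ha
    obtain ⟨a', ha', hj⟩ := exists_ne_joined h₁ a
    refine ⟨ContinuousMap.prodMk (ContinuousMap.const _ a') (ContinuousMap.snd.comp f₁),
      f₂, ?_, ContinuousMap.Homotopic.refl _, ?_, fun z hz x => hz x⟩
    · have hconst : (ContinuousMap.fst.comp f₁ : C(Sph m, N₁)) =
          ContinuousMap.const _ a := ContinuousMap.ext fun x => hU x x₀
      have hcc : (ContinuousMap.const (Sph m) a').Homotopic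
          (ContinuousMap.fst.comp f₁) := by
        rw [hconst]
        exact (const_homotopic hj).symm
      obtain ⟨F⟩ := hcc
      refine ⟨?_⟩
      have := F.prodMk (ContinuousMap.Homotopy.refl (ContinuousMap.snd.comp f₁))
      rwa [prodMk_comp_eq] at this
    · intro x h
      have h1 := congrArg Prod.fst h
      have h2 : (f₂ x).1 = a := by rw [← hU x₀ x, hU x₀ x₀]
      exact ha' (h1.trans h2)
  · by_cases hV : ∀ p q : Sph m, (f₁ p).2 = (f₂ q).2
    · -- both second components are the same constant
      set b : N₂ := (f₂ x₀).2 with hb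
      obtain ⟨b', hb', hj⟩ := exists_ne_joined h₂ b
      refine ⟨ContinuousMap.prodMk (ContinuousMap.fst.comp f₁) (ContinuousMap.const _ b'),
        f₂, ?_, ContinuousMap.Homotopic.refl _, ?_, fun z hz x => hz x⟩
      · have hconst : (ContinuousMap.snd.comp f₁ : C(Sph m, N₂)) =
            ContinuousMap.const _ b := ContinuousMap.ext fun x => hV x x₀
        have hcc : (ContinuousMap.const (Sph m) b').Homotopic
            (ContinuousMap.snd.comp f₁) := by
          rw [hconst]
          exact (const_homotopic hj).symm
        obtain ⟨F⟩ := hcc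
        refine ⟨?_⟩
        have := (ContinuousMap.Homotopy.refl (ContinuousMap.fst.comp f₁)).prodMk F
        rwa [prodMk_comp_eq] at this
      · intro x h
        have h1 := congrArg Prod.snd h
        have h2 : (f₂ x).2 = b := by rw [← hV x₀ x, hV x₀ x₀]
        exact hb' (h1.trans h2)
    · -- main case
      push_neg at hU hV
      obtain ⟨p₁, p₂, hp⟩ := hU
      obtain ⟨q₁, q₂, hq⟩ := hV
      obtain ⟨T₁, hT₁, hT₁z⟩ := exists_drag hm (southP m) p₁
      obtain ⟨T₂, hT₂, hT₂z⟩ := exists_drag hm (southP m) p₂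
      obtain ⟨S₁, hS₁, hS₁z⟩ := exists_drag hm (northP m) q₁
      obtain ⟨S₂, hS₂, hS₂z⟩ := exists_drag hm (northP m) q₂
      have hAh := collapseMap_homotopic m
      have hBh := anticollapseMap_homotopic m
      refine ⟨ContinuousMap.prodMk
          ((ContinuousMap.fst.comp f₁).comp (T₁.comp (collapseMap m)))
          ((ContinuousMap.snd.comp f₁).comp (S₁.comp (anticollapseMap m))),
        ContinuousMap.prodMk
          ((ContinuousMap.fst.comp f₂).comp (T₂.comp (collapseMap m)))
          ((ContinuousMap.snd.comp f₂).comp (S₂.comp (anticollapseMap m))),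
        ?_, ?_, ?_, ?_⟩
      · obtain ⟨F⟩ := comp_collapse_homotopic (ContinuousMap.fst.comp f₁) hAh hT₁
        obtain ⟨G⟩ := comp_collapse_homotopic (ContinuousMap.snd.comp f₁) hBh hS₁
        refine ⟨?_⟩
        have := F.prodMk G
        rwa [prodMk_comp_eq] at this
      · obtain ⟨F⟩ := comp_collapse_homotopic (ContinuousMap.fst.comp f₂) hAh hT₂
        obtain ⟨G⟩ := comp_collapse_homotopic (ContinuousMap.snd.comp f₂) hBh hS₂
        refine ⟨?_⟩
        have := F.prodMk G
        rwa [prodMk_comp_eq] at this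
      · intro x h
        by_cases hx : ⟪(x : Esp m), sphE m⟫ ≤ 0
        · have hA : collapseMap m x = southP m := collapseMap_south m x hx
          have h1 := congrArg Prod.fst h
          apply hp
          calc (f₁ p₁).1 = (f₁ (T₁ (collapseMap m x))).1 := by rw [hA, hT₁z]
          _ = (f₂ (T₂ (collapseMap m x))).1 := h1
          _ = (f₂ p₂).1 := by rw [hA, hT₂z]
        · have hx' : 0 ≤ ⟪(x : Esp m), sphE m⟫ := le_of_lt (not_le.mp hx)
          have hB : anticollapseMap m x = northP m := anticollapseMap_north m x hx'
          have h1 := congrArg Prod.snd h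
          apply hq
          calc (f₁ q₁).2 = (f₁ (S₁ (anticollapseMap m x))).2 := by rw [hB, hS₁z]
          _ = (f₂ (S₂ (anticollapseMap m x))).2 := h1
          _ = (f₂ q₂).2 := by rw [hB, hS₂z]
      · intro z hz x
        show ((f₂ (T₂ (collapseMap m x))).1, (f₂ (S₂ (anticollapseMap m x))).2) = z
        rw [hz (T₂ (collapseMap m x)), hz (S₂ (anticollapseMap m x))]

end LooseAux

variable {m n₁ n₂ : ℕ}
variable {N₁ : Type u} [TopologicalSpace N₁] [ChartedSpace (EuclideanSpace ℝ (Fin n₁)) N₁]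
  [IsManifold (𝓡 n₁) (⊤ : ℕ∞) N₁] [ConnectedSpace N₁]
variable {N₂ : Type u} [TopologicalSpace N₂] [ChartedSpace (EuclideanSpace ℝ (Fin n₂)) N₂]
  [IsManifold (𝓡 n₂) (⊤ : ℕ∞) N₂] [ConnectedSpace N₂]

/-- Part of Corollary 6.3: if `N = N₁ × N₂` with `dim N₁, dim N₂ ≥ 1`, then every pair of
maps `S^m → N₁ × N₂` is loose; in particular every map is homotopic to one missing any
given point. -/
theorem loose_of_product_target (hm : 1 ≤ m) (h₁ : 1 ≤ n₁) (h₂ : 1 ≤ n₂) :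
    (∀ f₁ f₂ : C(Sph m, N₁ × N₂), Loose f₁ f₂) ∧
      (∀ (f : C(Sph m, N₁ × N₂)) (y : N₁ × N₂),
        ∃ g : C(Sph m, N₁ × N₂), g.Homotopic f ∧ ∀ x : Sph m, g x ≠ y) := by
  constructor
  · intro f₁ f₂
    obtain ⟨g₁, g₂, ha, hb, hc, _⟩ := LooseAux.key_lemma hm h₁ h₂ f₁ f₂
    exact ⟨g₁, g₂, ha, hb, hc⟩
  · intro f y
    obtain ⟨g₁, g₂, ha, hb, hc, hd⟩ :=
      LooseAux.key_lemma hm h₁ h₂ f (ContinuousMap.const _ y)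
    refine ⟨g₁, ha, fun x => ?_⟩
    have h := hd y (fun _ => rfl) x
    rw [← h]
    exact hc x
end
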